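/- arXiv:2302.14690 — 7 statements merged into one kernel-verified Lean document; each statement's English description precedes it below -/
import Mathlib

section
/- Let 𝔻 ⊆ ℝ^{d_in} and let ℒ : 𝔻 × ℝ → [0,∞) satisfy: (i) for every y ∈ ℝ the map 𝔻 ∋ x ↦ ℒ(x,y) is continuous; (ii) for every x ∈ 𝔻 the map ℝ ∋ y ↦ ℒ(x,y) is strictly convex and attains its minimum. Then ℒ : 𝔻 × ℝ → [0,∞) is jointly continuous. -/
noncomputable section

open MeasureTheory Set Filter Topology ENNReal

abbrev Euc (din : ℕ) : Type := EuclideanSpace ℝ (Fin din)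

def dot {din : ℕ} (w x : Euc din) : ℝ := ∑ i, w i * x i

abbrev Params (din d : ℕ) : Type :=
  (Fin (d + 1) → Euc din) × (Fin d → ℝ) × (Fin (d + 1) → ℝ)

def response {din d : ℕ} (W : Params din d) (x : Euc din) : ℝ :=
  dot (W.1 0) x + W.2.2 0 +
    ∑ j : Fin d, W.2.1 j * max (dot (W.1 j.succ) x + W.2.2 j.succ) 0

def mSupport {din : ℕ} (μ : Measure (Euc din)) : Set (Euc din) :=
  {x | ∀ U : Set (Euc din), IsOpen U → x ∈ U → 0 < μ U}

def GenRespDimLE (din d : ℕ) (R : Euc din → ℝ) : Prop :=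
  ∃ (K : ℕ) (ν : Fin K → Euc din) (o : Fin K → ℝ) (m : Fin K → ℕ)
    (a : Euc din →ᵃ[ℝ] ℝ) (δ : Fin K → Euc din) (b : Fin K → ℝ),
    (∀ k, ν k ≠ 0) ∧
    (∀ k l : Fin K, k ≠ l →
      {x : Euc din | dot (ν k) x = o k} ≠ {x : Euc din | dot (ν l) x = o l}) ∧
    (∀ k, m k = 1 ∨ m k = 2) ∧
    (∑ k, m k) ≤ d ∧
    (∀ k, m k = 1 →
      {x : Euc din | dot (ν k) x = o k} ⊆ {x : Euc din | dot (δ k) x + b k = 0}) ∧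
    (∀ x, R x = a x + ∑ k, {y : Euc din | o k < dot (ν k) y}.indicator
        (fun y => dot (δ k) y + b k) x)

def IsGenResp (din : ℕ) (R : Euc din → ℝ) : Prop := ∃ d, GenRespDimLE din d R

def IsSimpleGenResp (din : ℕ) (R : Euc din → ℝ) : Prop :=
  IsGenResp din R ∧ Continuous R

def GenRespStrict (din d : ℕ) (R : Euc din → ℝ) : Prop :=
  GenRespDimLE din d R ∧ (GenRespDimLE din (d - 1) R ∨ ¬ Continuous R)

def regularPts {din : ℕ} (μ : Measure (Euc din)) (n : Euc din) (c : ℝ) : Set (Euc din) :=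
  {x | dot n x = c ∧
    (∀ U : Set (Euc din), IsOpen U → x ∈ U → 0 < μ (U ∩ {y | c < dot n y})) ∧
    (∀ U : Set (Euc din), IsOpen U → x ∈ U → 0 < μ (U ∩ {y | dot n y < c}))}

def NiceMeasure {din : ℕ} (μ : Measure (Euc din)) : Prop :=
  (∀ n : Euc din, n ≠ 0 → ∀ c : ℝ, μ {x | dot n x = c} = 0) ∧
  (∀ n : Euc din, n ≠ 0 → ∀ c : ℝ,
    0 < μ {x | c < dot n x} → 0 < μ {x | dot n x < c} →
    ¬ ∃ (m : ℕ) (ns : Fin m → Euc din) (cs : Fin m → ℝ),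
      (∀ i, ns i ≠ 0) ∧
      (∀ i, {x : Euc din | dot (ns i) x = cs i} ≠ {x : Euc din | dot n x = c}) ∧
      regularPts μ n c ⊆ ⋃ i, {x : Euc din | dot (ns i) x = cs i})


/-- A convex function on ℝ is locally Lipschitz near `y₀`, with constant controlled by its
values at `y₀ ± 1` and `y₀ ± 2`. -/
lemma convex_local_lipschitz (f : ℝ → ℝ) (hf : ConvexOn ℝ (Set.univ : Set ℝ) f)
    (y₀ u : ℝ) (hu : |u - y₀| ≤ 1) :
    |f u - f y₀| ≤ max (f (y₀ + 2) - f (y₀ + 1)) (f (y₀ - 2) - f (y₀ - 1)) * |u - y₀| := by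
  rcases eq_or_ne u y₀ with rfl | hne
  · simp
  obtain ⟨hu1, hu2⟩ := abs_le.1 hu
  set K := max (f (y₀ + 2) - f (y₀ + 1)) (f (y₀ - 2) - f (y₀ - 1)) with hKdef
  have hKl : f (y₀ + 2) - f (y₀ + 1) ≤ K := le_max_left _ _
  have hKr : f (y₀ - 2) - f (y₀ - 1) ≤ K := le_max_right _ _
  have hs_up : (f u - f y₀) / (u - y₀) ≤ (f (y₀ + 2) - f y₀) / (y₀ + 2 - y₀) :=
    hf.secant_mono (mem_univ _) (mem_univ _) (mem_univ _) hne (by intro h; linarith)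
      (by linarith)
  have hs_lo : (f (y₀ - 2) - f y₀) / (y₀ - 2 - y₀) ≤ (f u - f y₀) / (u - y₀) :=
    hf.secant_mono (mem_univ _) (mem_univ _) (mem_univ _) (by intro h; linarith) hne
      (by linarith)
  have hs_up2 : (f (y₀ + 2) - f y₀) / (y₀ + 2 - y₀) ≤
      (f (y₀ + 2) - f (y₀ + 1)) / (y₀ + 2 - (y₀ + 1)) :=
    hf.secant_mono_aux3 (mem_univ _) (mem_univ _) (by linarith) (by linarith)
  have hs_lo2 : (f (y₀ - 1) - f (y₀ - 2)) / (y₀ - 1 - (y₀ - 2)) ≤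
      (f y₀ - f (y₀ - 2)) / (y₀ - (y₀ - 2)) :=
    hf.secant_mono_aux2 (mem_univ _) (mem_univ _) (by linarith) (by linarith)
  have e1 : y₀ + 2 - y₀ = 2 := by ring
  have e2 : y₀ + 2 - (y₀ + 1) = 1 := by ring
  have e3 : y₀ - 1 - (y₀ - 2) = 1 := by ring
  have e4 : y₀ - (y₀ - 2) = 2 := by ring
  have e5 : (f (y₀ - 2) - f y₀) / (y₀ - 2 - y₀) = (f y₀ - f (y₀ - 2)) / 2 := by
    rw [show y₀ - 2 - y₀ = (-2 : ℝ) by ring]; ring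
  rw [e1] at hs_up hs_up2
  rw [e2] at hs_up2
  rw [e3, e4] at hs_lo2
  rw [e5] at hs_lo
  rw [div_one] at hs_up2 hs_lo2
  have hK : |(f u - f y₀) / (u - y₀)| ≤ K :=
    abs_le.2 ⟨by linarith, by linarith⟩
  calc |f u - f y₀| = |(f u - f y₀) / (u - y₀)| * |u - y₀| := by
        rw [abs_div, div_mul_cancel₀]
        exact abs_ne_zero.2 (sub_ne_zero.2 hne)
    _ ≤ K * |u - y₀| := mul_le_mul_of_nonneg_right hK (abs_nonneg _)

/-- Lemma, part (I): joint continuity of the loss function. -/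
theorem loss_jointly_continuous
    (din : ℕ) (D : Set (Euc din))
    (L : Euc din → ℝ → ℝ)
    (hL0 : ∀ x ∈ D, ∀ y : ℝ, 0 ≤ L x y)
    (hLx : ∀ y : ℝ, ContinuousOn (fun x => L x y) D)
    (hLy : ∀ x ∈ D, StrictConvexOn ℝ (Set.univ : Set ℝ) (fun y => L x y))
    (hLmin : ∀ x ∈ D, ∃ y : ℝ, ∀ z : ℝ, L x y ≤ L x z) :
    ContinuousOn (fun p : Euc din × ℝ => L p.1 p.2) (D ×ˢ (Set.univ : Set ℝ)) := by
  clear hL0 hLmin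
  intro p hp
  have hpD : p.1 ∈ D := hp.1
  set K : Euc din → ℝ :=
    fun x => max (L x (p.2 + 2) - L x (p.2 + 1)) (L x (p.2 - 2) - L x (p.2 - 1)) with hKdef
  -- the first coordinate map sends the within-filter to `𝓝[D] p.1`
  have hfst : Tendsto Prod.fst (𝓝[D ×ˢ (Set.univ : Set ℝ)] p) (𝓝[D] p.1) :=
    continuous_fst.continuousWithinAt.tendsto_nhdsWithin (fun q hq => hq.1)
  have hLc : ∀ c : ℝ, Tendsto (fun q : Euc din × ℝ => L q.1 c)
      (𝓝[D ×ˢ (Set.univ : Set ℝ)] p) (𝓝 (L p.1 c)) :=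
    fun c => ((hLx c p.1 hpD).tendsto).comp hfst
  have hsnd : Tendsto (fun q : Euc din × ℝ => |q.2 - p.2|)
      (𝓝[D ×ˢ (Set.univ : Set ℝ)] p) (𝓝 0) := by
    have : Tendsto (fun q : Euc din × ℝ => |q.2 - p.2|) (𝓝 p) (𝓝 |p.2 - p.2|) := by
      apply Continuous.tendsto
      exact (continuous_snd.sub continuous_const).abs
    simpa using this.mono_left nhdsWithin_le_nhds
  have hg : Tendsto (fun q : Euc din × ℝ => K q.1 * |q.2 - p.2| + dist (L q.1 p.2) (L p.1 p.2))
      (𝓝[D ×ˢ (Set.univ : Set ℝ)] p) (𝓝 0) := by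
    have hKt : Tendsto (fun q : Euc din × ℝ => K q.1)
        (𝓝[D ×ˢ (Set.univ : Set ℝ)] p) (𝓝 (K p.1)) := by
      simp only [hKdef]
      exact ((hLc (p.2 + 2)).sub (hLc (p.2 + 1))).max ((hLc (p.2 - 2)).sub (hLc (p.2 - 1)))
    have h1 : Tendsto (fun q : Euc din × ℝ => K q.1 * |q.2 - p.2|)
        (𝓝[D ×ˢ (Set.univ : Set ℝ)] p) (𝓝 (K p.1 * 0)) := hKt.mul hsnd
    have h2 : Tendsto (fun q : Euc din × ℝ => dist (L q.1 p.2) (L p.1 p.2))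
        (𝓝[D ×ˢ (Set.univ : Set ℝ)] p) (𝓝 (dist (L p.1 p.2) (L p.1 p.2))) :=
      ((continuous_dist.comp (Continuous.prodMk continuous_id continuous_const)).tendsto
        _).comp (hLc p.2)
    simpa using h1.add h2
  have hev : ∀ᶠ q : Euc din × ℝ in 𝓝[D ×ˢ (Set.univ : Set ℝ)] p,
      dist (L q.1 q.2) (L p.1 p.2) ≤ K q.1 * |q.2 - p.2| + dist (L q.1 p.2) (L p.1 p.2) := by
    have hmem : ∀ᶠ q : Euc din × ℝ in 𝓝[D ×ˢ (Set.univ : Set ℝ)] p,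
        q ∈ D ×ˢ (Set.univ : Set ℝ) := self_mem_nhdsWithin
    have hball : ∀ᶠ q : Euc din × ℝ in 𝓝[D ×ˢ (Set.univ : Set ℝ)] p, dist q p < 1 :=
      eventually_nhdsWithin_of_eventually_nhds
        (Metric.eventually_nhds_iff_ball.2 ⟨1, one_pos, fun q hq => hq⟩)
    filter_upwards [hmem, hball] with q hqmem hqball
    have hq1 : q.1 ∈ D := hqmem.1
    have hy : |q.2 - p.2| ≤ 1 := by
      have hds : dist q.2 p.2 ≤ dist q p := by
        rw [Prod.dist_eq]; exact le_max_right _ _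
      rw [Real.dist_eq] at hds
      linarith
    have hconv : ConvexOn ℝ (Set.univ : Set ℝ) (fun y => L q.1 y) :=
      (hLy q.1 hq1).convexOn
    have hkey := convex_local_lipschitz (fun y => L q.1 y) hconv p.2 q.2 hy
    have htri : dist (L q.1 q.2) (L p.1 p.2) ≤
        |L q.1 q.2 - L q.1 p.2| + dist (L q.1 p.2) (L p.1 p.2) := by
      have := dist_triangle (L q.1 q.2) (L q.1 p.2) (L p.1 p.2)
      rwa [show dist (L q.1 q.2) (L q.1 p.2) = |L q.1 q.2 - L q.1 p.2| from Real.dist_eq _ _]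
        at this
    calc dist (L q.1 q.2) (L p.1 p.2)
        ≤ |L q.1 q.2 - L q.1 p.2| + dist (L q.1 p.2) (L p.1 p.2) := htri
      _ ≤ K q.1 * |q.2 - p.2| + dist (L q.1 p.2) (L p.1 p.2) := by
          exact add_le_add_left hkey _
  rw [ContinuousWithinAt, tendsto_iff_dist_tendsto_zero]
  exact squeeze_zero' (Eventually.of_forall fun q => dist_nonneg) hev hg
end
end

section
/- Let 𝔻 ⊆ ℝ^{d_in} and let ℒ : 𝔻 × ℝ → [0,∞) satisfy: (i) for every y ∈ ℝ the map 𝔻 ∋ x ↦ ℒ(x,y) is continuous; (ii) for every x ∈ 𝔻 the map ℝ ∋ y ↦ ℒ(x,y) is strictly convex and attains its minimum. Then for every compact K ⊆ ℝ the map 𝔻 ∋ x ↦ ℒ(x,·)|_K ∈ C(K,ℝ) is continuous with respect to the supremum norm on C(K,ℝ). -/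
noncomputable section

open MeasureTheory Set Filter Topology ENNReal

open Metric in
/-- Lemma, part (II): for every compact `K ⊆ ℝ`, the map
`x ↦ ℒ(x,·)|_K ∈ C(K,ℝ)` is continuous with respect to the supremum norm; equivalently,
`ℒ(x,·) → ℒ(x₀,·)` uniformly on `K` as `x → x₀` within `D`. -/
theorem loss_continuous_into_CK
    (din : ℕ) (D : Set (Euc din))
    (L : Euc din → ℝ → ℝ)
    (hL0 : ∀ x ∈ D, ∀ y : ℝ, 0 ≤ L x y)
    (hLx : ∀ y : ℝ, ContinuousOn (fun x => L x y) D)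
    (hLy : ∀ x ∈ D, StrictConvexOn ℝ (Set.univ : Set ℝ) (fun y => L x y))
    (hLmin : ∀ x ∈ D, ∃ y : ℝ, ∀ z : ℝ, L x y ≤ L x z) :
    ∀ K : Set ℝ, IsCompact K → ∀ x₀ ∈ D,
      TendstoUniformlyOn (fun x y => L x y) (fun y => L x₀ y) (nhdsWithin x₀ D) K := by
  intro K hK x₀ hx₀
  rw [Metric.tendstoUniformlyOn_iff]
  intro ε hε
  -- bound K inside a ball
  obtain ⟨R₀, hKR₀⟩ := hK.isBounded.subset_closedBall 0
  set ρ : ℝ := |R₀| + 1 with hρdef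
  have hρ : 0 < ρ := by positivity
  have hKρ : K ⊆ ball (0:ℝ) ρ := fun y hy => by
    have := hKR₀ hy
    simp only [mem_closedBall, Real.dist_eq, sub_zero] at this ⊢
    simp only [mem_ball, Real.dist_eq, sub_zero]
    calc |y| ≤ R₀ := this
      _ ≤ |R₀| := le_abs_self _
      _ < ρ := by simp [hρdef]
  set r : ℝ := ρ + 2 with hrdef
  -- bound function on ball via convexity + nonneg
  have hbound : ∀ x ∈ D, ∀ a, dist a (0:ℝ) < r → |L x a| ≤ max (L x (-r)) (L x r) := by
    intro x hx a ha
    rw [abs_of_nonneg (hL0 x hx a)]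
    have hseg : a ∈ segment ℝ (-r) r := by
      rw [segment_eq_Icc (by linarith)]
      simp only [Real.dist_eq, sub_zero, abs_lt] at ha
      constructor <;> linarith [ha.1, ha.2]
    exact (hLy x hx).convexOn.le_on_segment (mem_univ _) (mem_univ _) hseg
  set M : ℝ := max (L x₀ (-r)) (L x₀ r) + 1 with hMdef
  have hM1 : 1 ≤ M := by
    have := hL0 x₀ hx₀ (-r)
    have h2 := le_max_left (L x₀ (-r)) (L x₀ r)
    simp only [hMdef]; linarith
  have hMpos : 0 < M := by linarith
  -- the Lipschitz constant and grid size
  set δ : ℝ := ε / (3 * (2 * M + 1)) with hδdef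
  have hδpos : 0 < δ := by positivity
  -- finite cover of K by δ-balls
  have hcover : K ⊆ ⋃ z ∈ K, ball z δ := fun y hy =>
    mem_biUnion hy (mem_ball_self hδpos)
  obtain ⟨t, htK, htcover⟩ := hK.elim_nhds_subcover (fun z => ball z δ)
    (fun z _ => ball_mem_nhds z hδpos)
  -- events
  have E0 : ∀ᶠ x in nhdsWithin x₀ D, x ∈ D := self_mem_nhdsWithin
  have Ev : ∀ y : ℝ, Tendsto (fun x => L x y) (nhdsWithin x₀ D) (𝓝 (L x₀ y)) :=
    fun y => (hLx y).continuousWithinAt hx₀  -- hope type matches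
  have E1 : ∀ᶠ x in nhdsWithin x₀ D, L x (-r) ≤ M :=
    (Ev (-r)).eventually (eventually_le_nhds (by
      rw [hMdef]; linarith [le_max_left (L x₀ (-r)) (L x₀ r)]))
  have E2 : ∀ᶠ x in nhdsWithin x₀ D, L x r ≤ M :=
    (Ev r).eventually (eventually_le_nhds (by
      rw [hMdef]; linarith [le_max_right (L x₀ (-r)) (L x₀ r)]))
  have E3 : ∀ᶠ x in nhdsWithin x₀ D, ∀ z ∈ t, dist (L x z) (L x₀ z) < ε / 3 := by
    rw [eventually_all_finset]
    intro z _
    exact (Ev z).eventually (eventually_nhds_iff_ball.mpr ⟨ε/3, by positivity,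
      fun u hu => by simpa [Real.dist_eq, dist_comm] using hu⟩)
  filter_upwards [E0, E1, E2, E3] with x hxD hx1 hx2 hx3
  -- Lipschitz bound for both L x and L x₀ on ball 0 (r - 1)
  have lip : ∀ w ∈ D, max (L w (-r)) (L w r) ≤ M →
      ∀ y ∈ ball (0:ℝ) (r - 1), ∀ z ∈ ball (0:ℝ) (r - 1),
        dist (L w y) (L w z) ≤ 2 * M * dist y z := by
    intro w hw hMw y hy z hz
    have hconv : ConvexOn ℝ (ball (0:ℝ) r) (fun y => L w y) :=
      ((hLy w hw).convexOn).subset (subset_univ _) (convex_ball _ _)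
    have hlip := hconv.lipschitzOnWith_of_abs_le one_pos
      (M := M) (fun a ha => le_trans (hbound w hw a ha) hMw)
    have := hlip.dist_le_mul y hy z hz
    rwa [div_one, Real.coe_toNNReal _ (by positivity)] at this
  intro y hy
  have hy' := htcover hy
  simp only [mem_iUnion, mem_ball, exists_prop] at hy'
  obtain ⟨z, hzt, hyz⟩ := hy'
  have hzK : z ∈ K := htK z hzt
  have hyb : y ∈ ball (0:ℝ) (r - 1) :=
    ball_subset_ball (by simp [hrdef]; linarith) (hKρ hy)
  have hzb : z ∈ ball (0:ℝ) (r - 1) :=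
    ball_subset_ball (by simp [hrdef]; linarith) (hKρ hzK)
  have hd : dist y z < δ := by simpa [mem_ball] using hyz
  have b1 : dist (L x y) (L x z) ≤ 2 * M * δ := by
    calc dist (L x y) (L x z) ≤ 2 * M * dist y z := lip x hxD (max_le hx1 hx2) y hyb z hzb
      _ ≤ 2 * M * δ := by nlinarith [dist_nonneg (x := y) (y := z)]
  have b2 : dist (L x₀ y) (L x₀ z) ≤ 2 * M * δ := by
    calc dist (L x₀ y) (L x₀ z) ≤ 2 * M * dist y z := by
          apply lip x₀ hx₀ _ y hyb z hzb
          simp [hMdef]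
      _ ≤ 2 * M * δ := by nlinarith [dist_nonneg (x := y) (y := z)]
  have b3 : dist (L x z) (L x₀ z) < ε / 3 := hx3 z hzt
  have hMδ : 2 * M * δ < ε / 3 := by
    rw [hδdef, ← mul_div_assoc, div_lt_div_iff₀ (by positivity) (by norm_num)]
    nlinarith [mul_pos hε hMpos]
  have b3' : dist (L x₀ z) (L x z) < ε / 3 := by rwa [dist_comm]
  have b1' : dist (L x z) (L x y) ≤ 2 * M * δ := by rwa [dist_comm]
  have htri := dist_triangle4 (L x₀ y) (L x₀ z) (L x z) (L x y)
  have h1 : dist (L x₀ y) (L x₀ z) < ε / 3 := lt_of_le_of_lt b2 hMδ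
  have h2 : dist (L x z) (L x y) < ε / 3 := lt_of_le_of_lt b1' hMδ
  have : dist (L x₀ y) (L x y) < ε / 3 + ε / 3 + ε / 3 := by
    refine lt_of_le_of_lt htri ?_
    gcongr
  linarith
end
end

section
/- Let 𝔻 ⊆ ℝ^{d_in} and let ℒ : 𝔻 × ℝ → [0,∞) satisfy: (i) for every y ∈ ℝ the map 𝔻 ∋ x ↦ ℒ(x,y) is continuous; (ii) for every x ∈ 𝔻 the map ℝ ∋ y ↦ ℒ(x,y) is strictly convex and attains its minimum. Then there exists a unique function 𝔪 : 𝔻 → ℝ such that for every x ∈ 𝔻 one has ℒ(x, 𝔪(x)) = min_{y ∈ ℝ} ℒ(x,y); moreover, both 𝔪 : 𝔻 → ℝ and the map 𝔻 ∋ x ↦ min_{y ∈ ℝ} ℒ(x,y) ∈ ℝ are continuous. -/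
noncomputable section

open MeasureTheory Set Filter Topology ENNReal

/-- Auxiliary: a nonnegative convex function on ℝ satisfies a quantitative lower bound
near a point `p` in terms of its values at `p ± 1`. -/
lemma convex_lb_aux (f : ℝ → ℝ) (hf : ConvexOn ℝ (Set.univ : Set ℝ) f)
    (hf0 : ∀ y, 0 ≤ f y) (p y : ℝ) (hy : |y - p| ≤ 1) :
    f p - |y - p| * max (f (p + 1)) (f (p - 1)) ≤ f y := by
  rcases le_total y p with h | h
  · set s : ℝ := p - y with hs
    have habs : |y - p| = s := by rw [abs_of_nonpos (by linarith)]; ring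
    have hs0 : 0 ≤ s := by linarith
    have hs1 : (0:ℝ) < 1 + s := by linarith
    have ha : (0:ℝ) ≤ 1 / (1 + s) := by positivity
    have hb : (0:ℝ) ≤ s / (1 + s) := by positivity
    have hab : 1 / (1 + s) + s / (1 + s) = 1 := by field_simp
    have key := hf.2 (Set.mem_univ y) (Set.mem_univ (p + 1)) ha hb hab
    simp only [smul_eq_mul] at key
    have harg : (1 / (1 + s)) * y + (s / (1 + s)) * (p + 1) = p := by
      field_simp
      nlinarith [hs]
    rw [harg] at key
    have hkey : (1 + s) * f p ≤ f y + s * f (p + 1) := by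
      have := mul_le_mul_of_nonneg_left key (le_of_lt hs1)
      field_simp at this
      nlinarith [this]
    have hmax : f (p + 1) ≤ max (f (p + 1)) (f (p - 1)) := le_max_left _ _
    rw [habs]
    nlinarith [hf0 p, hf0 (p + 1), hkey, mul_le_mul_of_nonneg_left hmax hs0]
  · set s : ℝ := y - p with hs
    have habs : |y - p| = s := abs_of_nonneg (by linarith)
    have hs0 : 0 ≤ s := by linarith
    have hs1 : (0:ℝ) < 1 + s := by linarith
    have ha : (0:ℝ) ≤ 1 / (1 + s) := by positivity
    have hb : (0:ℝ) ≤ s / (1 + s) := by positivity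
    have hab : 1 / (1 + s) + s / (1 + s) = 1 := by field_simp
    have key := hf.2 (Set.mem_univ y) (Set.mem_univ (p - 1)) ha hb hab
    simp only [smul_eq_mul] at key
    have harg : (1 / (1 + s)) * y + (s / (1 + s)) * (p - 1) = p := by
      field_simp
      nlinarith [hs]
    rw [harg] at key
    have hkey : (1 + s) * f p ≤ f y + s * f (p - 1) := by
      have := mul_le_mul_of_nonneg_left key (le_of_lt hs1)
      field_simp at this
      nlinarith [this]
    have hmax : f (p - 1) ≤ max (f (p + 1)) (f (p - 1)) := le_max_right _ _
    rw [habs]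
    nlinarith [hf0 p, hf0 (p - 1), hkey, mul_le_mul_of_nonneg_left hmax hs0]

/-- Lemma, parts (III) and (IV): existence, uniqueness and continuity of
the pointwise minimizer `𝔪` and of the minimal value `x ↦ min_y ℒ(x,y)`. -/
theorem pointwise_minimizer_exists_unique_continuous
    (din : ℕ) (D : Set (Euc din))
    (L : Euc din → ℝ → ℝ)
    (hL0 : ∀ x ∈ D, ∀ y : ℝ, 0 ≤ L x y)
    (hLx : ∀ y : ℝ, ContinuousOn (fun x => L x y) D)
    (hLy : ∀ x ∈ D, StrictConvexOn ℝ (Set.univ : Set ℝ) (fun y => L x y))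
    (hLmin : ∀ x ∈ D, ∃ y : ℝ, ∀ z : ℝ, L x y ≤ L x z) :
    ∃ m : Euc din → ℝ,
      (∀ x ∈ D, ∀ y : ℝ, L x (m x) ≤ L x y) ∧
      (∀ m' : Euc din → ℝ, (∀ x ∈ D, ∀ y : ℝ, L x (m' x) ≤ L x y) →
        ∀ x ∈ D, m' x = m x) ∧
      ContinuousOn m D ∧
      ContinuousOn (fun x => L x (m x)) D := by
  classical
  have hconv : ∀ x ∈ D, ConvexOn ℝ (Set.univ : Set ℝ) (fun y => L x y) :=
    fun x hx => (hLy x hx).convexOn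
  -- uniqueness of minimizers
  have huniq : ∀ x ∈ D, ∀ y1 y2 : ℝ, (∀ z, L x y1 ≤ L x z) → (∀ z, L x y2 ≤ L x z) →
      y1 = y2 := by
    intro x hx y1 y2 h1 h2
    by_contra hne
    have hmid := (hLy x hx).2 (Set.mem_univ y1) (Set.mem_univ y2) hne
      (by norm_num : (0:ℝ) < 1/2) (by norm_num : (0:ℝ) < 1/2) (by norm_num)
    simp only [smul_eq_mul] at hmid
    have h1' := h1 ((1/2 : ℝ) * y1 + (1/2 : ℝ) * y2)
    have h12 := h1 y2
    have h21 := h2 y1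
    linarith
  set m : Euc din → ℝ := fun x => if hx : x ∈ D then (hLmin x hx).choose else 0 with hm
  have hmin : ∀ x ∈ D, ∀ z : ℝ, L x (m x) ≤ L x z := by
    intro x hx z
    simp only [hm, dif_pos hx]
    exact (hLmin x hx).choose_spec z
  -- if L x' p is smaller than L x' (p ± ε), then m x' is within ε of p
  have habs : ∀ x' ∈ D, ∀ p ε : ℝ, 0 < ε → L x' p < L x' (p + ε) → L x' p < L x' (p - ε) →
      |m x' - p| < ε := by
    intro x' hx' p ε hε h1 h2
    rw [abs_lt]
    constructor
    · by_contra hcon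
      push_neg at hcon
      have hseg : p - ε ∈ segment ℝ (m x') p := by
        rw [segment_eq_Icc (by linarith : m x' ≤ p)]
        constructor <;> linarith
      have := (hconv x' hx').le_on_segment (Set.mem_univ (m x')) (Set.mem_univ p) hseg
      have hmx : L x' (m x') ≤ L x' p := hmin x' hx' p
      rcases max_cases (L x' (m x')) (L x' p) with ⟨he, _⟩ | ⟨he, _⟩ <;>
        rw [he] at this <;> linarith
    · by_contra hcon
      push_neg at hcon
      have hseg : p + ε ∈ segment ℝ p (m x') := by
        rw [segment_eq_Icc (by linarith : p ≤ m x')]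
        constructor <;> linarith
      have := (hconv x' hx').le_on_segment (Set.mem_univ p) (Set.mem_univ (m x')) hseg
      have hmx : L x' (m x') ≤ L x' p := hmin x' hx' p
      rcases max_cases (L x' p) (L x' (m x')) with ⟨he, _⟩ | ⟨he, _⟩ <;>
        rw [he] at this <;> linarith
  -- strict separation at the minimizer
  have hstrict : ∀ x ∈ D, ∀ ε : ℝ, 0 < ε →
      L x (m x) < L x (m x + ε) ∧ L x (m x) < L x (m x - ε) := by
    intro x hx ε hε
    constructor
    · rcases lt_or_ge (L x (m x)) (L x (m x + ε)) with h | h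
      · exact h
      · exfalso
        have hmid := (hLy x hx).2 (Set.mem_univ (m x)) (Set.mem_univ (m x + ε))
          (by intro hc; linarith [congrArg id hc, (by linarith : m x ≠ m x + ε) hc])
          (by norm_num : (0:ℝ) < 1/2) (by norm_num : (0:ℝ) < 1/2) (by norm_num)
        simp only [smul_eq_mul] at hmid
        have := hmin x hx ((1/2 : ℝ) * m x + (1/2 : ℝ) * (m x + ε))
        linarith
    · rcases lt_or_ge (L x (m x)) (L x (m x - ε)) with h | h
      · exact h
      · exfalso
        have hmid := (hLy x hx).2 (Set.mem_univ (m x)) (Set.mem_univ (m x - ε))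
          (by intro hc; linarith [(by linarith : m x ≠ m x - ε) hc])
          (by norm_num : (0:ℝ) < 1/2) (by norm_num : (0:ℝ) < 1/2) (by norm_num)
        simp only [smul_eq_mul] at hmid
        have := hmin x hx ((1/2 : ℝ) * m x + (1/2 : ℝ) * (m x - ε))
        linarith
  -- continuity of m on D
  have hmc : ContinuousOn m D := by
    intro x hx
    rw [ContinuousWithinAt, Metric.tendsto_nhds]
    intro ε hε
    set p := m x with hp
    obtain ⟨hs1, hs2⟩ := hstrict x hx ε hε
    set c : ℝ := min (L x (p + ε)) (L x (p - ε)) - L x p with hc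
    have hc0 : 0 < c := by
      rcases min_cases (L x (p + ε)) (L x (p - ε)) with ⟨he, _⟩ | ⟨he, _⟩ <;>
        simp only [hc, he] <;> linarith
    have t0 : Filter.Tendsto (fun x' => L x' p) (nhdsWithin x D) (nhds (L x p)) :=
      (hLx p x hx)
    have t1 : Filter.Tendsto (fun x' => L x' (p + ε)) (nhdsWithin x D) (nhds (L x (p + ε))) :=
      (hLx (p + ε) x hx)
    have t2 : Filter.Tendsto (fun x' => L x' (p - ε)) (nhdsWithin x D) (nhds (L x (p - ε))) :=
      (hLx (p - ε) x hx)
    have e0 : ∀ᶠ x' in nhdsWithin x D, L x' p < L x p + c / 2 :=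
      t0.eventually_lt_const (by linarith)
    have e1 : ∀ᶠ x' in nhdsWithin x D, L x p + c / 2 < L x' (p + ε) := by
      refine t1.eventually_const_lt ?_
      have : L x p + c ≤ L x (p + ε) := by
        have := min_le_left (L x (p + ε)) (L x (p - ε)); simp only [hc] at *; linarith
      linarith
    have e2 : ∀ᶠ x' in nhdsWithin x D, L x p + c / 2 < L x' (p - ε) := by
      refine t2.eventually_const_lt ?_
      have : L x p + c ≤ L x (p - ε) := by
        have := min_le_right (L x (p + ε)) (L x (p - ε)); simp only [hc] at *; linarith
      linarith
    have eD : ∀ᶠ x' in nhdsWithin x D, x' ∈ D := self_mem_nhdsWithin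
    filter_upwards [e0, e1, e2, eD] with x' h0 h1 h2 hx'
    rw [Real.dist_eq]
    exact habs x' hx' p ε hε (by linarith) (by linarith)
  refine ⟨m, hmin, ?_, hmc, ?_⟩
  · intro m' hm' x hx
    exact huniq x hx (m' x) (m x) (hm' x hx) (hmin x hx)
  -- continuity of the minimal value
  · intro x hx
    rw [ContinuousWithinAt, Metric.tendsto_nhds]
    intro ε hε
    set p := m x with hp
    set B : ℝ := max (L x (p + 1)) (L x (p - 1)) + 1 with hB
    have hB0 : 0 < B := by
      have := hL0 x hx (p + 1)
      have := le_max_left (L x (p + 1)) (L x (p - 1))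
      simp only [hB]; linarith
    set η : ℝ := min 1 (ε / (3 * B)) with hη
    have hη0 : 0 < η := lt_min one_pos (by positivity)
    have hη1 : η ≤ 1 := min_le_left _ _
    have hηB : η * B ≤ ε / 3 := by
      have h1 : η ≤ ε / (3 * B) := min_le_right _ _
      calc η * B ≤ (ε / (3 * B)) * B := by nlinarith
        _ = ε / 3 := by field_simp
    have t0 : Filter.Tendsto (fun x' => L x' p) (nhdsWithin x D) (nhds (L x p)) := hLx p x hx
    have e0 : ∀ᶠ x' in nhdsWithin x D, |L x' p - L x p| < ε / 3 := by
      have := Metric.tendsto_nhds.mp t0 (ε / 3) (by linarith)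
      simpa [Real.dist_eq] using this
    have e1 : ∀ᶠ x' in nhdsWithin x D, L x' (p + 1) < B :=
      (hLx (p + 1) x hx).eventually_lt_const
        (by have := le_max_left (L x (p + 1)) (L x (p - 1)); simp only [hB]; linarith)
    have e2 : ∀ᶠ x' in nhdsWithin x D, L x' (p - 1) < B :=
      (hLx (p - 1) x hx).eventually_lt_const
        (by have := le_max_right (L x (p + 1)) (L x (p - 1)); simp only [hB]; linarith)
    have e3 : ∀ᶠ x' in nhdsWithin x D, |m x' - p| < η := by
      have := Metric.tendsto_nhds.mp (hmc x hx) η hη0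
      simpa [Real.dist_eq] using this
    have eD : ∀ᶠ x' in nhdsWithin x D, x' ∈ D := self_mem_nhdsWithin
    filter_upwards [e0, e1, e2, e3, eD] with x' h0 h1 h2 h3 hx'
    rw [Real.dist_eq, abs_lt]
    obtain ⟨h0a, h0b⟩ := abs_lt.mp h0
    -- upper bound
    have hub : L x' (m x') ≤ L x' p := hmin x' hx' p
    -- lower bound via convexity
    have hlb : L x' p - |m x' - p| * max (L x' (p + 1)) (L x' (p - 1)) ≤ L x' (m x') :=
      convex_lb_aux (fun y => L x' y) (hconv x' hx') (hL0 x' hx') p (m x')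
        (by linarith [le_of_lt h3])
    have hmaxB : max (L x' (p + 1)) (L x' (p - 1)) < B := max_lt h1 h2
    have hmax0 : 0 ≤ max (L x' (p + 1)) (L x' (p - 1)) :=
      le_trans (hL0 x' hx' (p + 1)) (le_max_left _ _)
    have hprod : |m x' - p| * max (L x' (p + 1)) (L x' (p - 1)) ≤ η * B := by
      apply mul_le_mul (le_of_lt h3) (le_of_lt hmaxB) hmax0 (by linarith)
    have hA : |m x' - p| * max (L x' (p + 1)) (L x' (p - 1)) ≤ ε / 3 :=
      le_trans hprod hηB
    have hlow : L x' p - ε / 3 ≤ L x' (m x') := by linarith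
    constructor
    · linarith
    · linarith
end
end

section
/- Let d ∈ ℕ₀, let ℛ : ℝ^{d_in} → ℝ be a function, and let φ : ℝ^{d_in} → ℝ^{d_in} be an injective affine map. Then: (i) ℛ ∈ 𝔯_d if and only if ℛ∘φ ∈ 𝔯_d; (ii) ℛ ∈ 𝔯_d^strict if and only if ℛ∘φ ∈ 𝔯_d^strict; (iii) ℛ is a simple generalized response if and only if ℛ∘φ is a simple generalized response. -/
noncomputable section

open MeasureTheory Set Filter Topology ENNReal

lemma dot_inner {din : ℕ} (w x : Euc din) : dot w x = inner ℝ w x := by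
  simp [dot, PiLp.inner_apply, mul_comm]

lemma dot_add_right {din : ℕ} (w u v : Euc din) : dot w (u + v) = dot w u + dot w v := by
  simp [dot, PiLp.add_apply, mul_add, Finset.sum_add_distrib]

lemma genRespDimLE_comp {din d : ℕ} (R : Euc din → ℝ) (φ : Euc din →ᵃ[ℝ] Euc din)
    (hφ : Function.Injective φ) (h : GenRespDimLE din d R) : GenRespDimLE din d (R ∘ φ) := by
  obtain ⟨K, ν, o, m, a, δ, b, h1, h2, h3, h4, h5, h6⟩ := h
  set L := φ.linear with hLdef
  have hLinj : Function.Injective L := (AffineMap.linear_injective_iff φ).mpr hφ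
  have hLsurj : Function.Surjective L := LinearMap.injective_iff_surjective.mp hLinj
  set A := LinearMap.adjoint L with hAdef
  have hdotA : ∀ w x : Euc din, dot (A w) x = dot w (L x) := by
    intro w x
    rw [dot_inner, dot_inner]
    exact L.adjoint_inner_left x w
  have hdecomp : ∀ x : Euc din, φ x = L x + φ 0 := by
    intro x
    have h0 := φ.linearMap_vsub x 0
    simp only [vsub_eq_sub, sub_zero] at h0
    have h0' : L x = φ x - φ 0 := h0
    rw [h0']
    abel
  have hdotφ : ∀ w x, dot w (φ x) = dot (A w) x + dot w (φ 0) := by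
    intro w x
    rw [hdotA, hdecomp x, dot_add_right]
  have hAzero : ∀ w : Euc din, A w = 0 → w = 0 := by
    intro w hw
    obtain ⟨y, hy⟩ := hLsurj w
    have h0 : (inner ℝ w w : ℝ) = 0 := by
      calc (inner ℝ w w : ℝ) = inner ℝ w (L y) := by rw [hy]
        _ = inner ℝ (A w) y := (L.adjoint_inner_left y w).symm
        _ = 0 := by rw [hw]; simp
    exact inner_self_eq_zero.mp h0
  have hφsurj : Function.Surjective φ := by
    intro y
    obtain ⟨x, hx⟩ := hLsurj (y - φ 0)
    exact ⟨x, by rw [hdecomp x, hx]; abel⟩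
  have hset : ∀ k, {x : Euc din | dot (A (ν k)) x = o k - dot (ν k) (φ 0)}
      = φ ⁻¹' {x : Euc din | dot (ν k) x = o k} := by
    intro k
    ext x
    simp only [Set.mem_setOf_eq, Set.mem_preimage, hdotφ (ν k) x]
    constructor <;> intro hx <;> linarith
  refine ⟨K, fun k => A (ν k), fun k => o k - dot (ν k) (φ 0), m, a.comp φ, fun k => A (δ k),
    fun k => b k + dot (δ k) (φ 0), ?_, ?_, h3, h4, ?_, ?_⟩
  · intro k hk
    exact h1 k (hAzero _ hk)
  · intro k l hkl heq
    apply h2 k l hkl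
    rw [hset k, hset l] at heq
    exact (Set.preimage_eq_preimage hφsurj).mp heq
  · intro k hk x hx
    rw [hset k] at hx
    have := h5 k hk hx
    simp only [Set.mem_setOf_eq] at this ⊢
    have h7 := hdotφ (δ k) x
    linarith
  · intro x
    rw [Function.comp_apply, h6 (φ x), AffineMap.comp_apply]
    congr 1
    apply Finset.sum_congr rfl
    intro k _
    have hδ := hdotφ (δ k) x
    have hν := hdotφ (ν k) x
    simp only [Set.indicator_apply, Set.mem_setOf_eq]
    by_cases hm : o k < dot (ν k) (φ x)
    · rw [if_pos hm, if_pos (by linarith)]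
      linarith
    · rw [if_neg hm, if_neg (by intro hc; exact hm (by linarith))]


lemma exists_affine_inverse {din : ℕ} (φ : Euc din →ᵃ[ℝ] Euc din)
    (hφ : Function.Injective φ) :
    ∃ ψ : Euc din →ᵃ[ℝ] Euc din, Function.Injective ψ ∧ (∀ x, φ (ψ x) = x) ∧ (∀ x, ψ (φ x) = x) := by
  set L := φ.linear with hLdef
  have hLinj : Function.Injective L := (AffineMap.linear_injective_iff φ).mpr hφ
  have hLsurj : Function.Surjective L := LinearMap.injective_iff_surjective.mp hLinj
  have hdecomp : ∀ x : Euc din, φ x = L x + φ 0 := by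
    intro x
    have h0 := φ.linearMap_vsub x 0
    simp only [vsub_eq_sub, sub_zero] at h0
    have h0' : L x = φ x - φ 0 := h0
    rw [h0']
    abel
  set Le := LinearEquiv.ofBijective L ⟨hLinj, hLsurj⟩ with hLe
  refine ⟨{ toFun := fun y => Le.symm (y - φ 0), linear := Le.symm,
            map_vadd' := by
              intro p v
              simp only [vadd_eq_add, LinearEquiv.coe_coe]
              rw [add_sub_assoc, map_add] }, ?_, ?_, ?_⟩
  · intro a b hab
    simp only [AffineMap.coe_mk] at hab
    have := Le.symm.injective hab
    exact sub_left_injective this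
  · intro x
    simp only [AffineMap.coe_mk]
    have h1 : (Le : Euc din → Euc din) (Le.symm (x - φ 0)) = x - φ 0 := Le.apply_symm_apply _
    have h2 : L (Le.symm (x - φ 0)) = x - φ 0 := h1
    rw [hdecomp, h2]
    abel
  · intro x
    simp only [AffineMap.coe_mk]
    have h1 : φ x - φ 0 = L x := by rw [hdecomp x]; abel
    rw [h1]
    exact Le.symm_apply_apply x

/-- Lemma on affine transformations: the classes `𝔯_d`, `𝔯_d^strict` and
the simple generalized responses are invariant under composition with an injective affine
map. -/
theorem genresp_affine_invariance
    (din : ℕ) (d : ℕ)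
    (R : Euc din → ℝ)
    (φ : Euc din →ᵃ[ℝ] Euc din) (hφ : Function.Injective φ) :
    (GenRespDimLE din d R ↔ GenRespDimLE din d (R ∘ φ)) ∧
    (GenRespStrict din d R ↔ GenRespStrict din d (R ∘ φ)) ∧
    (IsSimpleGenResp din R ↔ IsSimpleGenResp din (R ∘ φ))  := by
  obtain ⟨ψ, hψinj, hφψ, hψφ⟩ := exists_affine_inverse φ hφ
  have hR : R = (R ∘ φ) ∘ ψ := funext fun y => by simp [Function.comp, hφψ y]
  have hdim : ∀ d' : ℕ, GenRespDimLE din d' R ↔ GenRespDimLE din d' (R ∘ φ) := by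
    intro d'
    constructor
    · exact genRespDimLE_comp R φ hφ
    · intro h
      have := genRespDimLE_comp (R ∘ φ) ψ hψinj h
      rwa [← hR] at this
  have hcont : Continuous R ↔ Continuous (R ∘ φ) := by
    constructor
    · intro h
      exact h.comp φ.continuous_of_finiteDimensional
    · intro h
      rw [hR]
      exact h.comp ψ.continuous_of_finiteDimensional
  refine ⟨hdim d, ?_, ?_⟩
  · unfold GenRespStrict
    exact and_congr (hdim d) (or_congr (hdim (d - 1)) (not_congr hcont))
  · unfold IsSimpleGenResp IsGenResp
    exact and_congr (exists_congr fun d' => hdim d') hcont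
end
end

section
/- Let 𝔫 ∈ ℝ^{d_in} with |𝔫| = 1, δ ∈ ℝ^{d_in}, o, 𝔟 ∈ ℝ, set A = {x ∈ ℝ^{d_in} : 𝔫·x > o} and ℛ(x) = (δ·x + 𝔟) 1_A(x), and for n ∈ ℕ define ℛ_n(x) = (1/2)((δ + n𝔫)·x + 𝔟 − no)⁺ − (1/2)((−δ + n𝔫)·x − 𝔟 − no)⁺, where (·)⁺ = max(·,0). Then for every x ∈ ℝ^{d_in} with 𝔫·x ≠ o there exists N ∈ ℕ such that for all n ≥ N one has ℛ_n(x) = ℛ(x); in particular ℛ_n converges pointwise to ℛ on ℝ^{d_in} \ ∂A. -/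
noncomputable section

open MeasureTheory Set Filter Topology ENNReal

/-- Remark: asymptotic ANN representations of generalized responses:
the discontinuous response `x ↦ (δ·x + 𝔟) 1_A(x)` is, off the boundary hyperplane `∂A`,
the pointwise limit of the responses `ℛ_n` of two ReLU neurons. -/
theorem asymptotic_representation_two_relu
    (din : ℕ) (hdin : 0 < din)
    (𝔫 : Euc din) (h𝔫 : ‖𝔫‖ = 1) (δ : Euc din) (o 𝔟 : ℝ)
    (R : Euc din → ℝ)
    (hR : ∀ x : Euc din,
      R x = {y : Euc din | o < dot 𝔫 y}.indicator (fun y => dot δ y + 𝔟) x)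
    (Rn : ℕ → Euc din → ℝ)
    (hRn : ∀ (n : ℕ) (x : Euc din),
      Rn n x = (1 / 2) * max (dot (δ + (n : ℝ) • 𝔫) x + 𝔟 - (n : ℝ) * o) 0
        - (1 / 2) * max (dot (-δ + (n : ℝ) • 𝔫) x - 𝔟 - (n : ℝ) * o) 0) :
    (∀ x : Euc din, dot 𝔫 x ≠ o →
      ∃ N : ℕ, ∀ n ≥ N, Rn n x = R x) ∧
    (∀ x : Euc din, dot 𝔫 x ≠ o →
      Tendsto (fun n => Rn n x) atTop (𝓝 (R x))) := by

  have hdot : ∀ (c : ℝ) (w : Euc din) (x : Euc din),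
      dot (w + c • 𝔫) x = dot w x + c * dot 𝔫 x := by
    intro c w x
    simp [dot, PiLp.add_apply, PiLp.smul_apply, add_mul, Finset.sum_add_distrib,
      Finset.mul_sum, mul_assoc]
  have key : ∀ x : Euc din, dot 𝔫 x ≠ o → ∃ N : ℕ, ∀ n ≥ N, Rn n x = R x := by
    intro x hx
    set s : ℝ := dot δ x + 𝔟 with hs
    set t : ℝ := dot 𝔫 x - o with ht
    have htne : t ≠ 0 := sub_ne_zero.mpr hx
    refine ⟨⌈|s| / |t|⌉₊, fun n hn => ?_⟩
    have hnt : |s| ≤ (n : ℝ) * |t| := by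
      have h1 : |s| / |t| ≤ (n : ℝ) := le_trans (Nat.le_ceil _) (by exact_mod_cast hn)
      calc |s| = (|s| / |t|) * |t| := by field_simp
        _ ≤ (n : ℝ) * |t| := by
            exact mul_le_mul_of_nonneg_right h1 (abs_nonneg _)
    have hdneg : dot (-δ) x = - dot δ x := by
      simp [dot, PiLp.neg_apply, Finset.sum_neg_distrib]
    have harg1 : dot (δ + (n : ℝ) • 𝔫) x + 𝔟 - (n : ℝ) * o = s + (n : ℝ) * t := by
      rw [hdot]; ring
    have harg2 : dot (-δ + (n : ℝ) • 𝔫) x - 𝔟 - (n : ℝ) * o = -s + (n : ℝ) * t := by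
      rw [hdot, hdneg]; ring
    rw [hRn, harg1, harg2, hR]
    rcases lt_or_gt_of_ne hx with hlt | hgt
    · -- dot 𝔫 x < o, indicator is 0, t < 0
      have ht0 : t < 0 := sub_neg.mpr hlt
      have habs : (n : ℝ) * |t| = -((n : ℝ) * t) := by rw [abs_of_neg ht0]; ring
      have h1 : s + (n : ℝ) * t ≤ 0 := by
        nlinarith [hnt, le_abs_self s]
      have h2 : -s + (n : ℝ) * t ≤ 0 := by
        nlinarith [hnt, neg_abs_le s]
      rw [max_eq_right h1, max_eq_right h2]
      have : x ∉ {y : Euc din | o < dot 𝔫 y} := by simp [Set.mem_setOf_eq]; linarith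
      rw [Set.indicator_of_notMem this]; ring
    · have ht0 : 0 < t := sub_pos.mpr hgt
      have habs : (n : ℝ) * |t| = (n : ℝ) * t := by rw [abs_of_pos ht0]
      have h1 : 0 ≤ s + (n : ℝ) * t := by
        have := neg_abs_le s; nlinarith [hnt]
      have h2 : 0 ≤ -s + (n : ℝ) * t := by
        have := neg_abs_le (-s); nlinarith [hnt, abs_neg s]
      rw [max_eq_left h1, max_eq_left h2]
      have : x ∈ {y : Euc din | o < dot 𝔫 y} := by simp [Set.mem_setOf_eq]; linarith
      rw [Set.indicator_of_mem this]; ring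
  refine ⟨key, fun x hx => ?_⟩
  obtain ⟨N, hN⟩ := key x hx
  exact tendsto_const_nhds.congr' (eventually_atTop.mpr ⟨N, fun n hn => (hN n hn).symm⟩)
end
end

section
/- Let μ be a finite Borel measure on ℝ^{d_in} with compact support 𝔻 and let ℒ : 𝔻 × ℝ → [0,∞) be jointly continuous. Let d ∈ ℕ₀ and set err_d^ℒ = inf_{𝕎 ∈ 𝒲_d} ∫ ℒ(x, 𝔑^𝕎(x)) dμ(x). If there exists no 𝕎 ∈ 𝒲_d with ∫ ℒ(x, 𝔑^𝕎(x)) dμ(x) = err_d^ℒ, then every sequence (𝕎_n)_{n ∈ ℕ} ⊆ 𝒲_d with lim_{n→∞} ∫ ℒ(x, 𝔑^{𝕎_n}(x)) dμ(x) = err_d^ℒ satisfies lim_{n→∞} ‖𝕎_n‖ = ∞, where ‖·‖ denotes the Euclidean norm of the parameter vector. -/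
noncomputable section

open MeasureTheory Set Filter Topology ENNReal

lemma continuous_euc_apply {din : ℕ} {α : Type*} [TopologicalSpace α] {f : α → Euc din}
    (hf : Continuous f) (i : Fin din) : Continuous fun a => f a i :=
  ((continuous_apply (A := fun _ : Fin din => ℝ) i).comp
    (PiLp.continuous_ofLp (p := 2) (β := fun _ : Fin din => ℝ))).comp hf

@[fun_prop]
lemma Continuous.dot' {din : ℕ} {α : Type*} [TopologicalSpace α] {f g : α → Euc din}
    (hf : Continuous f) (hg : Continuous g) : Continuous fun a => dot (f a) (g a) := by
  unfold dot
  exact continuous_finset_sum _ fun i _ =>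
    (continuous_euc_apply hf i).mul (continuous_euc_apply hg i)

lemma response_joint_continuous {din d : ℕ} :
    Continuous fun p : Params din d × Euc din => response p.1 p.2 := by
  unfold response
  fun_prop

lemma mSupport_compl_null {din : ℕ} (μ : Measure (Euc din)) : μ (mSupport μ)ᶜ = 0 := by
  set B := TopologicalSpace.countableBasis (Euc din)
  have hB : TopologicalSpace.IsTopologicalBasis B :=
    TopologicalSpace.isBasis_countableBasis _
  have hBc : B.Countable := TopologicalSpace.countable_countableBasis _
  have hsub : (mSupport μ)ᶜ ⊆ ⋃ U ∈ {U ∈ B | μ U = 0}, U := by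
    intro x hx
    simp only [mSupport, mem_compl_iff, mem_setOf_eq, not_forall] at hx
    obtain ⟨U, hUo, hxU, hU0⟩ := hx
    have hU0' : μ U = 0 := by
      by_contra h; exact hU0 (pos_iff_ne_zero.2 h)
    obtain ⟨V, hVB, hxV, hVU⟩ := hB.exists_subset_of_mem_open hxU hUo
    exact mem_biUnion ⟨hVB, measure_mono_null hVU hU0'⟩ hxV
  refine measure_mono_null hsub ?_
  exact (measure_biUnion_null_iff (hBc.mono (sep_subset _ _))).2 fun U hU => hU.2

/-- Divergence of minimizing sequences when no minimizer exists. -/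
theorem minimizing_sequence_diverges
    (din : ℕ) (hdin : 0 < din) (d : ℕ)
    (μ : Measure (Euc din)) [IsFiniteMeasure μ]
    (D : Set (Euc din)) (hD : D = mSupport μ) (hDc : IsCompact D)
    (L : Euc din → ℝ → ℝ)
    (hL0 : ∀ x ∈ D, ∀ y : ℝ, 0 ≤ L x y)
    (hLc : ContinuousOn (fun p : Euc din × ℝ => L p.1 p.2) (D ×ˢ (Set.univ : Set ℝ)))
    (errd : ℝ≥0∞)
    (herrd : errd = ⨅ W : Params din d, ∫⁻ x, ENNReal.ofReal (L x (response W x)) ∂μ)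
    (hno : ¬ ∃ W : Params din d, ∫⁻ x, ENNReal.ofReal (L x (response W x)) ∂μ = errd)
    (Wseq : ℕ → Params din d)
    (hseq : Tendsto (fun n => ∫⁻ x, ENNReal.ofReal (L x (response (Wseq n) x)) ∂μ)
      atTop (𝓝 errd)) :
    Tendsto (fun n => ‖Wseq n‖) atTop atTop := by
  by_contra hdiv
  -- get a bounded subsequence
  obtain ⟨b, hb⟩ : ∃ b : ℝ, ∃ᶠ n in atTop, ‖Wseq n‖ < b := by
    by_contra h
    push_neg at h
    refine hdiv (tendsto_atTop.2 fun c => ?_)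
    have := h c
    exact this
  obtain ⟨φ, hφmono, hφ⟩ := extraction_of_frequently_atTop hb
  have hball : ∀ n, Wseq (φ n) ∈ Metric.closedBall (0 : Params din d) b := fun n => by
    simpa [Metric.mem_closedBall, dist_zero_right] using (hφ n).le
  obtain ⟨W, -, ψ, hψmono, hWlim⟩ :=
    (isCompact_closedBall (0 : Params din d) b).tendsto_subseq hball
  set V : ℕ → Params din d := fun n => Wseq (φ (ψ n)) with hV
  set F : Params din d → Euc din → ℝ≥0∞ :=
    fun P x => ENNReal.ofReal (L x (response P x)) with hF
  have hIseq : Tendsto (fun n => ∫⁻ x, F (V n) x ∂μ) atTop (𝓝 errd) :=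
    hseq.comp (hφmono.comp hψmono).tendsto_atTop
  have hDmeas : MeasurableSet D := hDc.isClosed.measurableSet
  have hDnull : μ Dᶜ = 0 := by rw [hD]; exact mSupport_compl_null μ
  have hrestrict : μ.restrict D = μ :=
    Measure.restrict_eq_self_of_ae_mem (by
      rw [ae_iff]
      exact hDnull)
  -- continuity of the parameter-to-value map at each x ∈ D
  have hx_tendsto : ∀ x ∈ D, Tendsto (fun n => F (V n) x) atTop (𝓝 (F W x)) := by
    intro x hxD
    have hr : Tendsto (fun n => response (V n) x) atTop (𝓝 (response W x)) := by
      have hcont : Continuous fun P : Params din d => response P x :=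
        response_joint_continuous.comp (continuous_id.prodMk continuous_const)
      exact (hcont.tendsto W).comp hWlim
    have hmem : (x, response W x) ∈ D ×ˢ (Set.univ : Set ℝ) := ⟨hxD, mem_univ _⟩
    have hseq' : Tendsto (fun n => ((x, response (V n) x) : Euc din × ℝ)) atTop
        (𝓝[D ×ˢ (Set.univ : Set ℝ)] (x, response W x)) := by
      rw [tendsto_nhdsWithin_iff]
      exact ⟨(tendsto_const_nhds.prodMk hr).trans (by rw [nhds_prod_eq]), Eventually.of_forall fun n => ⟨hxD, mem_univ _⟩⟩
    have hLlim : Tendsto (fun n => L x (response (V n) x)) atTop (𝓝 (L x (response W x))) :=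
      (hLc (x, response W x) hmem).tendsto.comp hseq'
    exact (ENNReal.continuous_ofReal.tendsto _).comp hLlim
  -- a.e. measurability on D
  have hFmeas : ∀ P : Params din d, AEMeasurable (F P) (μ.restrict D) := by
    intro P
    have hcx : Continuous fun x : Euc din => response P x :=
      response_joint_continuous.comp (continuous_const.prodMk continuous_id)
    have hcon : ContinuousOn (fun x => L x (response P x)) D := by
      have : ContinuousOn (fun x : Euc din => ((x, response P x) : Euc din × ℝ)) D :=
        (continuous_id.prodMk hcx).continuousOn
      exact hLc.comp this fun x hx => ⟨hx, mem_univ _⟩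
    exact ENNReal.measurable_ofReal.comp_aemeasurable (hcon.aemeasurable hDmeas)
  -- Fatou
  have key : ∫⁻ x, F W x ∂μ ≤ errd := by
    calc ∫⁻ x, F W x ∂μ = ∫⁻ x, F W x ∂(μ.restrict D) := by rw [hrestrict]
      _ = ∫⁻ x, liminf (fun n => F (V n) x) atTop ∂(μ.restrict D) := by
          refine lintegral_congr_ae ((ae_restrict_iff' hDmeas).2 (ae_of_all _ fun x hx => ?_))
          exact ((hx_tendsto x hx).liminf_eq).symm
      _ ≤ liminf (fun n => ∫⁻ x, F (V n) x ∂(μ.restrict D)) atTop :=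
          lintegral_liminf_le' fun n => hFmeas (V n)
      _ = liminf (fun n => ∫⁻ x, F (V n) x ∂μ) atTop := by rw [hrestrict]
      _ = errd := hIseq.liminf_eq
  have key2 : errd ≤ ∫⁻ x, F W x ∂μ := herrd ▸ iInf_le _ W
  exact hno ⟨W, le_antisymm key key2⟩
end
end

section
/- Let μ be a finite nonzero Borel measure on ℝ^{d_in} with compact support 𝔻 and a continuous Lebesgue density h : ℝ^{d_in} → [0,∞), and assume that for every hyperplane H ⊆ ℝ^{d_in} intersecting the interior of the convex hull of 𝔻 there exists x ∈ H with h(x) > 0. Then μ is a nice measure: every hyperplane has μ-measure zero, and for every open half-space A with μ(A) > 0 and μ((Ā)ᶜ) > 0 the set of ∂A-regular points cannot be covered by finitely many hyperplanes different from ∂A. -/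
noncomputable section

open MeasureTheory Set Filter Topology ENNReal

namespace NiceAux

variable {din : ℕ}

lemma dot_eq_inner (w x : Euc din) : dot w x = inner ℝ w x := by
  simp [dot, PiLp.inner_apply, RCLike.inner_apply, mul_comm]

lemma continuous_dot (w : Euc din) : Continuous (fun x => dot w x) := by
  simp only [dot_eq_inner]; exact continuous_const.inner continuous_id

lemma dot_add (w x y : Euc din) : dot w (x + y) = dot w x + dot w y := by
  simp [dot_eq_inner, inner_add_right]

lemma dot_smul (w : Euc din) (t : ℝ) (x : Euc din) : dot w (t • x) = t * dot w x := by
  simp [dot_eq_inner, inner_smul_right]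

lemma dot_sub (w x y : Euc din) : dot w (x - y) = dot w x - dot w y := by
  simp [dot_eq_inner, inner_sub_right]

lemma dot_comm (w x : Euc din) : dot w x = dot x w := by
  rw [dot_eq_inner, dot_eq_inner, real_inner_comm]

lemma dot_smul_left (w : Euc din) (t : ℝ) (x : Euc din) : dot (t • w) x = t * dot w x := by
  rw [dot_eq_inner, dot_eq_inner, real_inner_smul_left]

lemma dot_sub_left (w x y : Euc din) : dot (w - x) y = dot w y - dot x y := by
  rw [dot_comm, dot_sub, dot_comm y w, dot_comm y x]

lemma dot_zero (w : Euc din) : dot w 0 = 0 := by simp [dot]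

lemma dot_self_pos {w : Euc din} (hw : w ≠ 0) : 0 < dot w w := by
  rw [dot_eq_inner]
  exact lt_of_le_of_ne real_inner_self_nonneg (Ne.symm (inner_self_ne_zero.mpr hw))

/-- The hyperplane as an affine subspace. -/
def hplaneAS (n : Euc din) (c : ℝ) : AffineSubspace ℝ (Euc din) where
  carrier := {x | dot n x = c}
  smul_vsub_vadd_mem' t p₁ p₂ p₃ h₁ h₂ h₃ := by
    simp only [vsub_eq_sub, vadd_eq_add, mem_setOf_eq] at *
    rw [dot_add, dot_smul, dot_sub, h₁, h₂, h₃]; ring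

lemma volume_hyperplane {n : Euc din} (hn : n ≠ 0) (c : ℝ) :
    volume {x : Euc din | dot n x = c} = 0 := by
  have hne : hplaneAS n c ≠ ⊤ := by
    intro h
    have hx : ((c + 1) / dot n n) • n ∈ hplaneAS n c := h ▸ AffineSubspace.mem_top ℝ _ _
    have : dot n (((c + 1) / dot n n) • n) = c := hx
    rw [dot_smul, div_mul_cancel₀] at this
    · linarith
    · exact (dot_self_pos hn).ne'
  exact Measure.addHaar_affineSubspace volume (hplaneAS n c) hne

/-- withDensity measure of an open set containing a point of positive density is positive. -/
lemma mu_pos_of_open (h : Euc din → ℝ) (hh : Continuous h) {O : Set (Euc din)} (hO : IsOpen O)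
    {z : Euc din} (hz : z ∈ O) (hz2 : 0 < h z) :
    0 < (volume.withDensity fun x => ENNReal.ofReal (h x)) O := by
  set V : Set (Euc din) := O ∩ h ⁻¹' (Ioi (h z / 2)) with hV
  have hVo : IsOpen V := hO.inter (isOpen_Ioi.preimage hh)
  have hzV : z ∈ V := ⟨hz, by simp; linarith⟩
  have hVm : MeasurableSet V := hVo.measurableSet
  have hOm : MeasurableSet O := hO.measurableSet
  rw [withDensity_apply _ hOm]
  calc (0 : ℝ≥0∞) < ENNReal.ofReal (h z / 2) * volume V := by
        apply ENNReal.mul_pos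
        · simp [ENNReal.ofReal_pos]; linarith
        · exact (hVo.measure_pos volume ⟨z, hzV⟩).ne'
    _ = ∫⁻ _ in V, ENNReal.ofReal (h z / 2) ∂volume := by rw [setLIntegral_const]
    _ ≤ ∫⁻ x in V, ENNReal.ofReal (h x) ∂volume := by
        apply setLIntegral_mono' hVm
        intro x hx
        exact ENNReal.ofReal_le_ofReal (le_of_lt hx.2)
    _ ≤ ∫⁻ x in O, ENNReal.ofReal (h x) ∂volume := lintegral_mono_set inter_subset_left

lemma compl_support_null (μ : Measure (Euc din)) : μ (mSupport μ)ᶜ = 0 := by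
  by_cases hne : ((mSupport μ)ᶜ).Nonempty
  · have hx : ∀ x : ↥((mSupport μ)ᶜ), ∃ U : Set (Euc din), IsOpen U ∧ (x : Euc din) ∈ U ∧ μ U = 0 := by
      rintro ⟨x, hx⟩
      simp only [mem_compl_iff, mSupport, mem_setOf_eq, not_forall] at hx
      obtain ⟨U, hUo, hxU, hU⟩ := hx
      exact ⟨U, hUo, hxU, le_antisymm (not_lt.mp hU) zero_le⟩
    choose U hUo hxU hU0 using hx
    obtain ⟨T, hTc, hTU⟩ := TopologicalSpace.isOpen_iUnion_countable U hUo
    have hsub : (mSupport μ)ᶜ ⊆ ⋃ x ∈ T, U x := by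
      rw [hTU]
      intro x hx
      exact mem_iUnion.mpr ⟨⟨x, hx⟩, hxU ⟨x, hx⟩⟩
    refine measure_mono_null hsub ?_
    exact (measure_biUnion_null_iff hTc).mpr fun x _ => hU0 x
  · rw [not_nonempty_iff_eq_empty.mp hne]; simp

/-- Every point on the hyperplane with positive density is a regular point. -/
lemma regular_of_pos (h : Euc din → ℝ) (hh : Continuous h) {n : Euc din} (hn : n ≠ 0) (c : ℝ)
    {x : Euc din} (hx : dot n x = c) (hhx : 0 < h x) :
    x ∈ regularPts (volume.withDensity fun y => ENNReal.ofReal (h y)) n c := by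
  have hnn : 0 < ‖n‖ := norm_pos_iff.mpr hn
  refine ⟨hx, ?_, ?_⟩ <;> intro U hUo hxU
  · set W : Set (Euc din) := U ∩ h ⁻¹' (Ioi 0) with hW
    have hWo : IsOpen W := hUo.inter (isOpen_Ioi.preimage hh)
    have hxW : x ∈ W := ⟨hxU, by simpa using hhx⟩
    obtain ⟨r, hr, hball⟩ := Metric.isOpen_iff.mp hWo x hxW
    set t : ℝ := r / (2 * ‖n‖) with htdef
    have ht : 0 < t := by positivity
    set z : Euc din := x + t • n with hzdef
    have ht2 : t * ‖n‖ = r / 2 := by rw [htdef]; field_simp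
    have hzball : z ∈ Metric.ball x r := by
      rw [Metric.mem_ball, dist_eq_norm, hzdef, add_sub_cancel_left, norm_smul,
        Real.norm_eq_abs, abs_of_pos ht, ht2]
      linarith
    have hzW : z ∈ W := hball hzball
    have hzO : z ∈ U ∩ {y | c < dot n y} := by
      refine ⟨hzW.1, ?_⟩
      have : dot n z = c + t * dot n n := by rw [hzdef, dot_add, dot_smul, hx]
      simp only [mem_setOf_eq, this]
      nlinarith [dot_self_pos hn]
    have hO : IsOpen (U ∩ {y | c < dot n y}) :=
      hUo.inter (isOpen_Ioi.preimage (continuous_dot n))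
    exact mu_pos_of_open h hh hO hzO (by simpa using hzW.2)
  · set W : Set (Euc din) := U ∩ h ⁻¹' (Ioi 0) with hW
    have hWo : IsOpen W := hUo.inter (isOpen_Ioi.preimage hh)
    have hxW : x ∈ W := ⟨hxU, by simpa using hhx⟩
    obtain ⟨r, hr, hball⟩ := Metric.isOpen_iff.mp hWo x hxW
    set t : ℝ := r / (2 * ‖n‖) with htdef
    have ht : 0 < t := by positivity
    set z : Euc din := x + (-t) • n with hzdef
    have ht2 : t * ‖n‖ = r / 2 := by rw [htdef]; field_simp
    have hzball : z ∈ Metric.ball x r := by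
      rw [Metric.mem_ball, dist_eq_norm, hzdef, add_sub_cancel_left, norm_smul,
        Real.norm_eq_abs, abs_neg, abs_of_pos ht, ht2]
      linarith
    have hzW : z ∈ W := hball hzball
    have hzO : z ∈ U ∩ {y | dot n y < c} := by
      refine ⟨hzW.1, ?_⟩
      have : dot n z = c + (-t) * dot n n := by rw [hzdef, dot_add, dot_smul, hx]
      simp only [mem_setOf_eq, this]
      nlinarith [dot_self_pos hn]
    have hO : IsOpen (U ∩ {y | dot n y < c}) :=
      hUo.inter (isOpen_Iio.preimage (continuous_dot n))
    exact mu_pos_of_open h hh hO hzO (by simpa using hzW.2)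

/-- A linear functional given by `dot`. -/
def dotL (w : Euc din) : Euc din →ₗ[ℝ] ℝ where
  toFun x := dot w x
  map_add' x y := dot_add w x y
  map_smul' t x := dot_smul w t x

/-- Existence of a direction in the hyperplane transverse to all "bad" hyperplanes. -/
lemma exists_transverse {n : Euc din} (hn : n ≠ 0) {m : ℕ} (ns : Fin m → Euc din)
    (bad : Fin m → Prop)
    (hnotpar : ∀ i, bad i → ∀ l : ℝ, ns i ≠ l • n) :
    ∃ v : Euc din, dot n v = 0 ∧ ∀ i, bad i → dot (ns i) v ≠ 0 := by
  by_contra hcon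
  push_neg at hcon
  have hcon' : ∀ v : Euc din, dot n v = 0 → ∃ i, bad i ∧ dot (ns i) v = 0 := hcon
  set W : Submodule ℝ (Euc din) := LinearMap.ker (dotL n) with hWdef
  set p : {i : Fin m // bad i} → Subspace ℝ ↥W :=
    fun i => LinearMap.ker ((dotL (ns i.1)).comp W.subtype) with hpdef
  have hcov : ⋃ i, (p i : Set ↥W) = Set.univ := by
    ext v
    simp only [mem_iUnion, SetLike.mem_coe, mem_univ, iff_true]
    obtain ⟨i, hib, hi0⟩ := hcon' v.1 v.2
    exact ⟨⟨i, hib⟩, hi0⟩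
  obtain ⟨i, hi⟩ := Subspace.exists_eq_top_of_iUnion_eq_univ hcov
  have htop : ∀ w : Euc din, dot n w = 0 → dot (ns i.1) w = 0 := by
    intro w hw
    have hwW : w ∈ W := hw
    have : (⟨w, hwW⟩ : ↥W) ∈ p i := hi ▸ Submodule.mem_top
    exact this
  set l : ℝ := dot (ns i.1) n / dot n n with hldef
  set w : Euc din := ns i.1 - l • n with hwdef
  have hw0 : dot n w = 0 := by
    rw [hwdef, dot_sub, dot_smul, hldef, div_mul_cancel₀ _ (dot_self_pos hn).ne',
      dot_comm n (ns i.1), sub_self]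
  have h1 : dot (ns i.1) w = 0 := htop w hw0
  have h2 : dot w w = 0 := by
    rw [hwdef, dot_sub_left, dot_smul_left, ← hwdef, h1, hw0, mul_zero, sub_zero]
  have hweq : w = 0 := by
    by_contra hw
    exact (dot_self_pos hw).ne' h2
  exact hnotpar i.1 i.2 l (sub_eq_zero.mp (hwdef ▸ hweq))

end NiceAux

/-- the measure `μ` of the main theorem is a nice measure: every
hyperplane has `μ`-measure zero, and for every open half-space `A` with
`μ(A) > 0` and `μ((Ā)ᶜ) > 0` the set of `∂A`-regular points cannot be covered by
finitely many hyperplanes different from `∂A`. -/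
theorem measure_is_nice
    (din : ℕ) (hdin : 0 < din)
    (μ : Measure (Euc din)) [IsFiniteMeasure μ] (hμ0 : μ ≠ 0)
    (h : Euc din → ℝ) (hh : Continuous h) (hh0 : ∀ x, 0 ≤ h x)
    (hμ : μ = volume.withDensity fun x => ENNReal.ofReal (h x))
    (D : Set (Euc din)) (hD : D = mSupport μ) (hDc : IsCompact D)
    (hplane : ∀ n : Euc din, n ≠ 0 → ∀ c : ℝ,
      ({x : Euc din | dot n x = c} ∩ interior (convexHull ℝ D)).Nonempty →
      ∃ x : Euc din, dot n x = c ∧ 0 < h x) :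
    NiceMeasure μ := by
  classical
  open NiceAux in
  subst hμ hD
  set μ : Measure (Euc din) := volume.withDensity fun x => ENNReal.ofReal (h x) with hμdef
  have hac : μ ≪ volume := withDensity_absolutelyContinuous volume _
  constructor
  · intro n hn c
    exact hac (volume_hyperplane hn c)
  · intro n hn c hA hB
    rintro ⟨m, ns, cs, hns0, hnsne, hcover⟩
    -- the convex hull of the support and its interior
    set D : Set (Euc din) := mSupport μ with hDdef
    set G : Set (Euc din) := interior (convexHull ℝ D) with hGdef
    have hhullc : μ (convexHull ℝ D)ᶜ = 0 :=
      measure_mono_null (compl_subset_compl.mpr (subset_convexHull ℝ D)) (compl_support_null μ)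
    have hfr : μ (frontier (convexHull ℝ D)) = 0 :=
      hac ((convex_convexHull ℝ D).addHaar_frontier volume)
    have hsidepos : ∀ S : Set (Euc din), 0 < μ S → (S ∩ G).Nonempty := by
      intro S hS
      have hdiff : μ (S \ G) = 0 := by
        refine measure_mono_null ?_ (measure_union_null hhullc hfr)
        rintro x ⟨hxS, hxG⟩
        by_cases hx : x ∈ convexHull ℝ D
        · exact Or.inr ⟨subset_closure hx, hxG⟩
        · exact Or.inl hx
      have hpos : 0 < μ (S ∩ G) := by
        by_contra hc
        push_neg at hc
        have h0 : μ (S ∩ G) = 0 := le_antisymm hc zero_le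
        have := measure_le_inter_add_diff μ S G
        rw [h0, hdiff, add_zero] at this
        exact absurd (le_antisymm this zero_le) hS.ne'
      exact nonempty_of_measure_ne_zero hpos.ne'
    obtain ⟨a, haS, haG⟩ := hsidepos _ hA
    obtain ⟨b, hbS, hbG⟩ := hsidepos _ hB
    -- find a point of the hyperplane inside the interior of the hull
    have hGc : Convex ℝ G := (convex_convexHull ℝ D).interior
    have hg : Continuous (fun t : ℝ => dot n (a + t • (b - a))) :=
      (continuous_dot n).comp (continuous_const.add (continuous_id.smul continuous_const))
    have hIVT := intermediate_value_Icc' (zero_le_one (α := ℝ)) hg.continuousOn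
    have hg0 : dot n (a + (0:ℝ) • (b - a)) = dot n a := by simp
    have hg1 : dot n (a + (1:ℝ) • (b - a)) = dot n b := by
      rw [one_smul, dot_add, dot_sub]; ring
    have hcmem : c ∈ Icc (dot n (a + (1:ℝ) • (b - a))) (dot n (a + (0:ℝ) • (b - a))) := by
      rw [hg0, hg1]
      exact ⟨le_of_lt hbS, le_of_lt haS⟩
    obtain ⟨t, ht01, hgt⟩ := hIVT hcmem
    have hzG : a + t • (b - a) ∈ G := by
      have := hGc haG hbG (by linarith [ht01.2] : (0:ℝ) ≤ 1 - t) ht01.1 (by ring)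
      have heq : (1 - t) • a + t • b = a + t • (b - a) := by module
      rwa [heq] at this
    obtain ⟨x₀, hx₀H, hx₀pos⟩ := hplane n hn c ⟨a + t • (b - a), hgt, hzG⟩
    -- a ball around x₀ on which h is positive
    obtain ⟨r, hr, hball⟩ := Metric.isOpen_iff.mp (isOpen_Ioi.preimage hh) x₀
      (by simpa using hx₀pos)
    -- no covering hyperplane through x₀ is parallel to the main hyperplane
    have hnotpar : ∀ i, dot (ns i) x₀ = cs i → ∀ l : ℝ, ns i ≠ l • n := by
      intro i hi l heq
      have hl : l ≠ 0 := by
        rintro rfl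
        rw [zero_smul] at heq
        exact hns0 i heq
      apply hnsne i
      ext x
      simp only [mem_setOf_eq, heq, dot_smul_left]
      have hci : cs i = l * c := by rw [← hi, heq, dot_smul_left, hx₀H]
      constructor
      · intro hx
        have : l * dot n x = l * c := by rw [hx, hci]
        exact mul_left_cancel₀ hl this
      · intro hx
        rw [hx, hci]
    obtain ⟨v, hvn, hvbad⟩ :=
      exists_transverse hn ns (fun i => dot (ns i) x₀ = cs i) hnotpar
    -- x₀ itself is regular, hence covered, giving a bad index; in particular v ≠ 0
    have hx₀reg : x₀ ∈ regularPts μ n c := regular_of_pos h hh hn c hx₀H hx₀pos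
    obtain ⟨i₀, hi₀⟩ := mem_iUnion.mp (hcover hx₀reg)
    have hv0 : v ≠ 0 := by
      rintro rfl
      exact hvbad i₀ hi₀ (dot_zero (ns i₀))
    have hvnorm : 0 < ‖v‖ := norm_pos_iff.mpr hv0
    set ε : ℝ := r / ‖v‖ with hεdef
    have hε : 0 < ε := by positivity
    -- the segment of the hyperplane in the ball gets covered
    have hsub : Ioo (-ε) ε ⊆ ⋃ i, {t : ℝ | dot (ns i) (x₀ + t • v) = cs i} := by
      intro t ht
      set y : Euc din := x₀ + t • v with hydef
      have hyball : y ∈ Metric.ball x₀ r := by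
        rw [Metric.mem_ball, dist_eq_norm, hydef, add_sub_cancel_left, norm_smul,
          Real.norm_eq_abs]
        have habs : |t| < ε := abs_lt.mpr ⟨ht.1, ht.2⟩
        calc |t| * ‖v‖ < ε * ‖v‖ := by exact mul_lt_mul_of_pos_right habs hvnorm
          _ = r := by rw [hεdef, div_mul_cancel₀ _ hvnorm.ne']
      have hyH : dot n y = c := by
        rw [hydef, dot_add, dot_smul, hvn, hx₀H, mul_zero, add_zero]
      have hypos : 0 < h y := hball hyball
      have hyreg : y ∈ regularPts μ n c := regular_of_pos h hh hn c hyH hypos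
      obtain ⟨i, hi⟩ := mem_iUnion.mp (hcover hyreg)
      exact mem_iUnion.mpr ⟨i, hi⟩
    have hfin : ∀ i, Set.Finite {t : ℝ | dot (ns i) (x₀ + t • v) = cs i} := by
      intro i
      apply Set.Subsingleton.finite
      intro t htm s hsm
      simp only [mem_setOf_eq, dot_add, dot_smul] at htm hsm
      by_cases hiv : dot (ns i) v = 0
      · exfalso
        rw [hiv, mul_zero, add_zero] at htm
        exact hvbad i htm hiv
      · have : t * dot (ns i) v = s * dot (ns i) v := by linarith
        exact mul_right_cancel₀ hiv this
    have hIoo : (Ioo (-ε) ε).Infinite :=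
      Set.infinite_coe_iff.mp (Set.Ioo.infinite (by linarith))
    exact (hIoo.mono hsub) (Set.finite_iUnion hfin)
end
end
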